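/- For every j ∈ {1,2}, every natural number m with 0 ≤ m ≤ k, and every a ∈ I_{kΛ₀}, one has a · x_{α_j}(−1)^m ∈ I_{kΛ₀} + U(𝔫̄)·x_{α₁+α₂}(−1). -/

import Mathlib

/- Setup: the nilpotent subalgebra 𝔫 ⊂ 𝔰𝔩(3,ℂ) spanned by E₁₂, E₂₃, E₁₃, its loop
algebra 𝔫̄ = 𝔫 ⊗ ℂ[t,t⁻¹], and the universal enveloping algebra U(𝔫̄). -/

noncomputable section
open scoped TensorProduct

attribute [local instance 100] LieRing.ofAssociativeRing

namespace PrincipalSubspaceSL3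

/-- 3×3 complex matrices. -/
abbrev gl3 : Type := Matrix (Fin 3) (Fin 3) ℂ

/-- The root vectors: `Egen 0 = x_{α₁} = E₁₂`, `Egen 1 = x_{α₂} = E₂₃`,
`Egen 2 = x_{α₁+α₂} = E₁₃`. -/
def Egen : Fin 3 → gl3
  | 0 => Matrix.single 0 1 1
  | 1 => Matrix.single 1 2 1
  | 2 => Matrix.single 0 2 1

lemma egen_lie_mem :
    ∀ x ∈ Submodule.span ℂ (Set.range Egen), ∀ y ∈ Submodule.span ℂ (Set.range Egen),
      ⁅x, y⁆ ∈ Submodule.span ℂ (Set.range Egen) := by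
  have key : ∀ a b : Fin 3, ⁅Egen a, Egen b⁆ ∈ Submodule.span ℂ (Set.range Egen) := by
    intro a b
    fin_cases a <;> fin_cases b <;>
      simp only [Egen, Ring.lie_def, Matrix.single_mul_single_same,
        Matrix.single_mul_single_of_ne, Fin.reduceEq, ne_eq, not_false_eq_true,
        one_mul, sub_zero, zero_sub, sub_self] <;>
      first
        | exact Submodule.zero_mem _
        | exact Submodule.subset_span ⟨2, rfl⟩
        | exact Submodule.neg_mem _ (Submodule.subset_span ⟨2, rfl⟩)
  intro x hx
  induction hx using Submodule.span_induction with
  | mem x hxs =>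
      obtain ⟨a, rfl⟩ := hxs
      intro y hy
      induction hy using Submodule.span_induction with
      | mem y hys => obtain ⟨b, rfl⟩ := hys; exact key a b
      | zero => simp
      | add y z hy hz hy' hz' => rw [lie_add]; exact Submodule.add_mem _ hy' hz'
      | smul c y hy hy' => rw [lie_smul]; exact Submodule.smul_mem _ _ hy'
  | zero => intro y hy; simp
  | add x z hx hz hx' hz' =>
      intro y hy; rw [add_lie]; exact Submodule.add_mem _ (hx' y hy) (hz' y hy)
  | smul c x hx hx' =>
      intro y hy; rw [smul_lie]; exact Submodule.smul_mem _ _ (hx' y hy)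

/-- The nilpotent Lie subalgebra 𝔫 = ℂE₁₂ ⊕ ℂE₂₃ ⊕ ℂE₁₃ of 𝔰𝔩(3,ℂ). -/
def nn : LieSubalgebra ℂ gl3 :=
  { Submodule.span ℂ (Set.range Egen) with
    lie_mem' := fun {x y} hx hy => egen_lie_mem x hx y hy }

/-- Laurent polynomials ℂ[t, t⁻¹]. -/
abbrev A : Type := LaurentPolynomial ℂ

/-- The loop algebra 𝔫̄ = 𝔫 ⊗ ℂ[t,t⁻¹]. -/
abbrev nbar : Type := A ⊗[ℂ] nn

set_option synthInstance.maxHeartbeats 1000000 in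
instance : LieAlgebra ℂ nbar where
  lie_smul c x y := by
    have h := lie_smul (algebraMap ℂ A c) x y
    rwa [algebraMap_smul, algebraMap_smul] at h

/-- The root vectors as elements of 𝔫. -/
def en (i : Fin 3) : nn := ⟨Egen i, Submodule.subset_span ⟨i, rfl⟩⟩

/-- `nx i m` is the element x_{α}(m) = x_α ⊗ tᵐ of 𝔫̄, where α is α₁, α₂, α₁+α₂
according to i = 0, 1, 2. -/
def nx (i : Fin 3) (m : ℤ) : nbar := LaurentPolynomial.T m ⊗ₜ[ℂ] en i

/-- The universal enveloping algebra U(𝔫̄). -/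
abbrev U : Type := UniversalEnvelopingAlgebra ℂ nbar

/-- `xg i m` is the element x_α(m) regarded inside U(𝔫̄). -/
def xg (i : Fin 3) (m : ℤ) : U := UniversalEnvelopingAlgebra.ι ℂ (nx i m)

/-- `Rtr k i t` = R^i_{-1,t} : the sum of x_{α_i}(m₁)⋯x_{α_i}(m_{k+1}) over all integer
tuples with every m_j ≤ -1 and m₁+⋯+m_{k+1} = -t (parametrized by m_j = -1 - n_j with
n : Fin (k+1) → ℕ, ∑ n = t - (k+1)).  Here i : Fin 2 refers to the simple root α_{i+1}. -/
def Rtr (k : ℕ) (i : Fin 2) (t : ℤ) : U :=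
  ∑ f ∈ Finset.Nat.antidiagonalTuple (k + 1) (t - (k + 1)).toNat,
    (List.ofFn fun j : Fin (k + 1) => xg i.castSucc (-1 - (f j : ℤ))).prod

/-- The left ideal J = Σ_{i,t≥k+1} U(𝔫̄)·R^i_{-1,t}. -/
def Jid (k : ℕ) : Submodule U U :=
  Submodule.span U {u : U | ∃ i : Fin 2, ∃ t : ℤ, (k : ℤ) + 1 ≤ t ∧ u = Rtr k i t}

/-- The left ideal U(𝔫̄)·𝔫̄₊, generated by the x_α(m) with m ≥ 0. -/
def nplusIdeal : Submodule U U :=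
  Submodule.span U {u : U | ∃ i : Fin 3, ∃ m : ℤ, 0 ≤ m ∧ u = xg i m}

/-- The left ideal I_{kΛ₀} = J + U(𝔫̄)·𝔫̄₊. -/
def IkL0 (k : ℕ) : Submodule U U := Jid k ⊔ nplusIdeal

/-- The left ideal I_{k₀Λ₀+k₁Λ₁+k₂Λ₂} = I_{kΛ₀} + U·x_{α₁}(-1)^{k₀+k₂+1}
+ U·x_{α₂}(-1)^{k₀+k₁+1} + U·x_{α₁+α₂}(-1)^{k₀+1} (with k = k₀+k₁+k₂). -/
def Iwt (k k0 k1 k2 : ℕ) : Submodule U U :=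
  IkL0 k ⊔ Submodule.span U {xg 0 (-1) ^ (k0 + k2 + 1)}
    ⊔ Submodule.span U {xg 1 (-1) ^ (k0 + k1 + 1)}
    ⊔ Submodule.span U {xg 2 (-1) ^ (k0 + 1)}


set_option synthInstance.maxHeartbeats 1000000
set_option maxHeartbeats 1000000
section Aux
open UniversalEnvelopingAlgebra

lemma en_lie_01 : ⁅en 0, en 1⁆ = en 2 := by
  apply Subtype.ext
  show ⁅Egen 0, Egen 1⁆ = Egen 2
  simp [Egen, Ring.lie_def, Matrix.single_mul_single_same, Matrix.single_mul_single_of_ne]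

lemma en_lie_10 : ⁅en 1, en 0⁆ = -en 2 := by
  rw [← lie_skew, en_lie_01]

lemma E13_lie (Y : gl3) (hY : Y ∈ Submodule.span ℂ (Set.range Egen)) : ⁅Egen 2, Y⁆ = 0 := by
  induction hY using Submodule.span_induction with
  | mem y hys =>
      obtain ⟨b, rfl⟩ := hys
      fin_cases b <;>
        simp [Egen, Ring.lie_def, Matrix.single_mul_single_same,
          Matrix.single_mul_single_of_ne]
  | zero => simp
  | add y z _ _ hy hz => rw [lie_add, hy, hz, add_zero]
  | smul c y _ hy => rw [lie_smul, hy, smul_zero]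

lemma en2_lie (y : nn) : ⁅en 2, y⁆ = 0 := by
  apply Subtype.ext
  show ⁅Egen 2, (y : gl3)⁆ = 0
  exact E13_lie y y.2

lemma nx_lie (a b : Fin 3) (m p : ℤ) :
    ⁅nx a m, nx b p⁆ = LaurentPolynomial.T (m + p) ⊗ₜ[ℂ] ⁅en a, en b⁆ := by
  rw [nx, nx, LieAlgebra.ExtendScalars.bracket_tmul, LaurentPolynomial.T_add]

lemma nx2_lie (q : ℤ) (v : nbar) : ⁅nx 2 q, v⁆ = 0 := by
  induction v using TensorProduct.induction_on with
  | zero => exact lie_zero (L := nbar) (M := nbar) (nx 2 q)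
  | tmul a y =>
      show ⁅LaurentPolynomial.T q ⊗ₜ[ℂ] en 2, a ⊗ₜ[ℂ] y⁆ = 0
      rw [LieAlgebra.ExtendScalars.bracket_tmul, en2_lie, TensorProduct.tmul_zero]
  | add v w hv hw =>
      have := lie_add (L := nbar) (M := nbar) (nx 2 q) v w
      exact this.trans (by rw [hv, hw, add_zero])

lemma xg_mul (a b : Fin 3) (m p : ℤ) :
    xg a m * xg b p = xg b p * xg a m + UniversalEnvelopingAlgebra.ι ℂ ⁅nx a m, nx b p⁆ := by
  rw [LieHom.map_lie, Ring.lie_def]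
  show xg a m * xg b p = xg b p * xg a m + (xg a m * xg b p - xg b p * xg a m)
  abel

lemma xg_comm01 (m p : ℤ) : xg 0 m * xg 1 p = xg 1 p * xg 0 m + xg 2 (m + p) := by
  rw [xg_mul, nx_lie, en_lie_01]; rfl

lemma xg_comm10 (m p : ℤ) : xg 1 m * xg 0 p = xg 0 p * xg 1 m - xg 2 (m + p) := by
  rw [xg_mul, nx_lie, en_lie_10, TensorProduct.tmul_neg, map_neg, sub_eq_add_neg]; rfl

lemma xg_commute_same (i : Fin 3) (m p : ℤ) : Commute (xg i m) (xg i p) := by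
  show xg i m * xg i p = xg i p * xg i m
  rw [xg_mul, nx_lie, lie_self, TensorProduct.tmul_zero, map_zero, add_zero]

lemma xg2_central (q : ℤ) (u : U) : Commute (xg 2 q) u := by
  obtain ⟨t, rfl⟩ : ∃ t, UniversalEnvelopingAlgebra.mkAlgHom ℂ nbar t = u :=
    RingCon.mkₐ_surjective (α := ℂ) (UniversalEnvelopingAlgebra.ringCon ℂ nbar) u
  induction t using TensorAlgebra.induction with
  | algebraMap r =>
      rw [AlgHom.commutes]
      exact (Algebra.commutes r (xg 2 q)).symm
  | ι x =>
      have h1 : (UniversalEnvelopingAlgebra.mkAlgHom ℂ nbar)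
          (TensorAlgebra.ι ℂ x) = UniversalEnvelopingAlgebra.ι ℂ x := rfl
      rw [h1]
      have h2 : UniversalEnvelopingAlgebra.ι ℂ ⁅nx 2 q, x⁆
          = ⁅xg 2 q, UniversalEnvelopingAlgebra.ι ℂ x⁆ := LieHom.map_lie _ _ _
      rw [nx2_lie, map_zero, Ring.lie_def] at h2
      exact sub_eq_zero.mp h2.symm
  | mul a b ha hb => rw [map_mul]; exact ha.mul_right hb
  | add a b ha hb => rw [map_add]; exact ha.add_right hb

lemma prod_swap (x : U) (c : ℂ) (Y Z : ℤ → U)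
    (h : ∀ q : ℤ, Y q * x = x * Y q + c • Z q) :
    ∀ (n : ℕ) (p : Fin n → ℤ),
      (List.ofFn fun l => Y (p l)).prod * x
        = x * (List.ofFn fun l => Y (p l)).prod
          + c • ∑ i : Fin n, (List.ofFn fun l => if l = i then Z (p l) else Y (p l)).prod := by
  intro n
  induction n with
  | zero => intro p; simp
  | succ n ih =>
    intro p
    rw [List.ofFn_succ, List.prod_cons, mul_assoc, ih (fun l => p l.succ)]
    rw [Fin.sum_univ_succ]
    have h0 : (List.ofFn fun l : Fin (n+1) => if l = 0 then Z (p l) else Y (p l)).prod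
        = Z (p 0) * (List.ofFn fun l : Fin n => Y (p l.succ)).prod := by
      rw [List.ofFn_succ, List.prod_cons, if_pos rfl]
      simp [Fin.succ_ne_zero]
    have hs : ∀ i : Fin n,
        (List.ofFn fun l : Fin (n+1) => if l = i.succ then Z (p l) else Y (p l)).prod
          = Y (p 0) * (List.ofFn fun l : Fin n =>
              if l = i then Z (p l.succ) else Y (p l.succ)).prod := by
      intro i
      rw [List.ofFn_succ, List.prod_cons, if_neg (Fin.succ_ne_zero i).symm]
      simp only [Fin.succ_inj]
    rw [h0]
    simp only [hs]
    rw [mul_add, ← mul_assoc, h (p 0), add_mul, smul_mul_assoc, mul_assoc,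
      mul_smul_comm, Finset.mul_sum, smul_add, Finset.smul_sum]
    abel

lemma ofFn_prod_mem_span :
    ∀ (n : ℕ) (i : Fin n) (f : Fin n → U), f i = xg 2 (-1) →
      (List.ofFn f).prod ∈ Submodule.span U {xg 2 (-1)} := by
  intro n
  induction n with
  | zero => exact fun i => absurd i.2 (by omega)
  | succ n ih =>
    intro i f hf
    rw [List.ofFn_succ, List.prod_cons]
    induction i using Fin.cases with
    | zero =>
        rw [hf, (xg2_central (-1) _).eq]
        exact Submodule.smul_mem _ _ (Submodule.mem_span_singleton_self _)
    | succ i' =>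
        exact Submodule.smul_mem _ (f 0) (ih i' (fun l => f l.succ) hf)

lemma sum_update_add_one (n : ℕ) (g : Fin n → ℕ) (i : Fin n) :
    ∑ l, Function.update g i (g i + 1) l = (∑ l, g l) + 1 := by
  rw [Finset.sum_update_of_mem (Finset.mem_univ i),
    Finset.sum_eq_sum_sdiff_singleton_add (Finset.mem_univ i) g]
  omega

lemma sum_update_sub_one (n : ℕ) (g : Fin n → ℕ) (i : Fin n) (h : g i ≠ 0) :
    ∑ l, Function.update g i (g i - 1) l = (∑ l, g l) - 1 := by
  rw [Finset.sum_update_of_mem (Finset.mem_univ i),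
    Finset.sum_eq_sum_sdiff_singleton_add (Finset.mem_univ i) g]
  omega

lemma sum_reindex {n : ℕ} (s : ℕ) (i : Fin n) (F G : (Fin n → ℕ) → U)
    (hFG : ∀ f, F f = G (Function.update f i (f i + 1))) :
    ∑ f ∈ Finset.Nat.antidiagonalTuple n s, F f
      = ∑ g ∈ Finset.Nat.antidiagonalTuple n (s + 1), if g i = 0 then 0 else G g := by
  have h1 : ∑ g ∈ Finset.Nat.antidiagonalTuple n (s + 1), (if g i = 0 then (0:U) else G g)
      = ∑ g ∈ (Finset.Nat.antidiagonalTuple n (s + 1)).filter (fun g => g i ≠ 0), G g := by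
    rw [Finset.sum_filter]
    apply Finset.sum_congr rfl
    intro g _
    by_cases h : g i = 0 <;> simp [h]
  rw [h1]
  apply Finset.sum_nbij' (i := fun f => Function.update f i (f i + 1))
    (j := fun g => Function.update g i (g i - 1))
  · intro f hf
    rw [Finset.Nat.mem_antidiagonalTuple] at hf
    rw [Finset.mem_filter, Finset.Nat.mem_antidiagonalTuple]
    refine ⟨?_, by simp⟩
    rw [sum_update_add_one, hf]
  · intro g hg
    rw [Finset.mem_filter, Finset.Nat.mem_antidiagonalTuple] at hg
    rw [Finset.Nat.mem_antidiagonalTuple, sum_update_sub_one n g i hg.2, hg.1]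
    omega
  · intro f hf
    funext l
    by_cases h : l = i
    · subst h; simp
    · simp [Function.update_of_ne h]
  · intro g hg
    rw [Finset.mem_filter] at hg
    funext l
    by_cases h : l = i
    · subst h
      have hgi : g l - 1 + 1 = g l := by
        have := hg.2
        omega
      simp [Function.update_self, Function.update_idem, hgi]
    · simp [Function.update_of_ne h]
  · intro f hf
    exact hFG f

lemma xg_mem_nplus (i : Fin 3) (m : ℤ) (hm : 0 ≤ m) : xg i m ∈ nplusIdeal :=
  Submodule.subset_span ⟨i, m, hm, rfl⟩

lemma Rtr_mem_Jid (k : ℕ) (i : Fin 2) (t : ℤ) (ht : (k:ℤ) + 1 ≤ t) : Rtr k i t ∈ Jid k :=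
  Submodule.subset_span ⟨i, t, ht, rfl⟩

lemma mixed_core (k : ℕ) (i j : Fin 2) (t : ℤ) (ht : (k:ℤ) + 1 ≤ t) (c : ℂ)
    (hx : ∀ q : ℤ, xg i.castSucc q * xg j.castSucc (-1)
        = xg j.castSucc (-1) * xg i.castSucc q + c • xg 2 (q - 1))
    (hw : ∀ q : ℤ, xg i.castSucc q * xg j.castSucc 0
        = xg j.castSucc 0 * xg i.castSucc q + c • xg 2 q) :
    Rtr k i t * xg j.castSucc (-1) ∈ IkL0 k ⊔ Submodule.span U {xg 2 (-1)} := by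
  set n : ℕ := k + 1 with hn
  set x : U := xg j.castSucc (-1) with hxdef
  set w : U := xg j.castSucc 0 with hwdef
  set s : ℕ := (t - ((k:ℤ) + 1)).toNat with hsdef
  have hts : (t - (k + 1)).toNat = s := rfl
  have hts1 : (t + 1 - (k + 1)).toNat = s + 1 := by omega
  -- the two correction sums
  set S1 : U := ∑ f ∈ Finset.Nat.antidiagonalTuple n s, ∑ i0 : Fin n,
      (List.ofFn fun l => if l = i0 then xg 2 (-1 - (f l : ℤ) - 1)
        else xg i.castSucc (-1 - (f l : ℤ))).prod with hS1def
  set S2 : U := ∑ g ∈ Finset.Nat.antidiagonalTuple n (s + 1), ∑ i0 : Fin n,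
      (List.ofFn fun l => if l = i0 then xg 2 (-1 - (g l : ℤ))
        else xg i.castSucc (-1 - (g l : ℤ))).prod with hS2def
  set S0 : U := ∑ g ∈ Finset.Nat.antidiagonalTuple n (s + 1), ∑ i0 : Fin n,
      (if g i0 = 0 then (List.ofFn fun l => if l = i0 then xg 2 (-1 - (g l : ℤ))
        else xg i.castSucc (-1 - (g l : ℤ))).prod else 0) with hS0def
  -- step A
  have hA : Rtr k i t * x = x * Rtr k i t + c • S1 := by
    rw [Rtr, hts, Finset.sum_mul, hS1def, Finset.smul_sum, ← hn]
    rw [Finset.mul_sum, ← Finset.sum_add_distrib]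
    apply Finset.sum_congr rfl
    intro f _
    exact prod_swap x c (fun q => xg i.castSucc q) (fun q => xg 2 (q - 1)) hx n
      (fun l => -1 - (f l : ℤ))
  -- step B
  have hB : Rtr k i (t + 1) * w = w * Rtr k i (t + 1) + c • S2 := by
    rw [Rtr, hts1, Finset.sum_mul, hS2def, Finset.smul_sum, ← hn]
    rw [Finset.mul_sum, ← Finset.sum_add_distrib]
    apply Finset.sum_congr rfl
    intro g _
    have := prod_swap w c (fun q => xg i.castSucc q) (fun q => xg 2 q) hw n
      (fun l => -1 - (g l : ℤ))
    exact this
  -- split S2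
  have hsplit : S2 = S1 + S0 := by
    have hpos : S1 = ∑ g ∈ Finset.Nat.antidiagonalTuple n (s + 1), ∑ i0 : Fin n,
        (if g i0 = 0 then 0 else (List.ofFn fun l => if l = i0 then xg 2 (-1 - (g l : ℤ))
          else xg i.castSucc (-1 - (g l : ℤ))).prod) := by
      rw [hS1def, Finset.sum_comm, Finset.sum_comm
        (s := Finset.Nat.antidiagonalTuple n (s + 1))]
      apply Finset.sum_congr rfl
      intro i0 _
      apply sum_reindex s i0
      intro f
      refine congrArg List.prod (congrArg List.ofFn (funext fun l => ?_))
      by_cases h : l = i0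
      · subst h
        rw [if_pos rfl, if_pos rfl, Function.update_self]
        push_cast
        ring_nf
      · rw [if_neg h, if_neg h, Function.update_of_ne h]
    rw [hpos, hS0def, hS2def, ← Finset.sum_add_distrib]
    apply Finset.sum_congr rfl
    intro g _
    rw [← Finset.sum_add_distrib]
    apply Finset.sum_congr rfl
    intro i0 _
    by_cases h : g i0 = 0 <;> simp [h]
  -- memberships
  have hmem1 : x * Rtr k i t ∈ IkL0 k :=
    Submodule.mem_sup_left (Submodule.smul_mem _ x (Rtr_mem_Jid k i t ht))
  have hmem2 : Rtr k i (t + 1) * w ∈ IkL0 k :=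
    Submodule.mem_sup_right
      (Submodule.smul_mem _ (Rtr k i (t + 1)) (xg_mem_nplus j.castSucc 0 le_rfl))
  have hmem3 : w * Rtr k i (t + 1) ∈ IkL0 k :=
    Submodule.mem_sup_left (Submodule.smul_mem _ w (Rtr_mem_Jid k i (t + 1) (by omega)))
  have hmem0 : S0 ∈ Submodule.span U {xg 2 (-1)} := by
    apply Submodule.sum_mem
    intro g _
    apply Submodule.sum_mem
    intro i0 _
    by_cases h : g i0 = 0
    · rw [if_pos h]
      apply ofFn_prod_mem_span n i0
      rw [if_pos rfl, h]
      norm_num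
    · rw [if_neg h]; exact Submodule.zero_mem _
  -- assemble
  have hkey : Rtr k i t * x
      = x * Rtr k i t + Rtr k i (t + 1) * w - w * Rtr k i (t + 1) - c • S0 := by
    rw [hA]
    have h2 : c • S2 = Rtr k i (t + 1) * w - w * Rtr k i (t + 1) := by
      rw [hB]; abel
    rw [hsplit, smul_add] at h2
    have h3 : c • S1 = Rtr k i (t + 1) * w - w * Rtr k i (t + 1) - c • S0 := by
      rw [← h2]; abel
    rw [h3]
    abel
  rw [hkey]
  have hT1 : x * Rtr k i t ∈ IkL0 k ⊔ Submodule.span U {xg 2 (-1)} :=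
    Submodule.mem_sup_left hmem1
  refine Submodule.sub_mem _ (Submodule.sub_mem _ (Submodule.add_mem _ hT1 ?_) ?_) ?_
  · exact Submodule.mem_sup_left hmem2
  · exact Submodule.mem_sup_left hmem3
  · refine Submodule.mem_sup_right ?_
    have := Submodule.smul_mem (Submodule.span U {xg 2 (-1)}) (algebraMap ℂ U c) hmem0
    rwa [algebraMap_smul] at this

lemma fin2_mk0 : (⟨0, by omega⟩ : Fin 2) = 0 := rfl
lemma fin2_mk1 : (⟨1, by omega⟩ : Fin 2) = 1 := rfl
lemma fin3_mk0 : (⟨0, by omega⟩ : Fin 3) = 0 := rfl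
lemma fin3_mk1 : (⟨1, by omega⟩ : Fin 3) = 1 := rfl
lemma fin3_mk2 : (⟨2, by omega⟩ : Fin 3) = 2 := rfl
lemma cs0 : (0 : Fin 2).castSucc = (0 : Fin 3) := rfl
lemma cs1 : (1 : Fin 2).castSucc = (1 : Fin 3) := rfl

lemma Rtr_x_mem (k : ℕ) (i j : Fin 2) (t : ℤ) (ht : (k:ℤ) + 1 ≤ t) :
    Rtr k i t * xg j.castSucc (-1) ∈ IkL0 k ⊔ Submodule.span U {xg 2 (-1)} := by
  by_cases hij : i = j
  · subst hij
    have hc : Commute (xg i.castSucc (-1)) (Rtr k i t) := by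
      rw [Rtr]
      apply Commute.sum_right
      intro f _
      apply Commute.list_prod_right
      intro u hu
      rw [List.mem_ofFn] at hu
      obtain ⟨l, rfl⟩ := hu
      exact xg_commute_same i.castSucc (-1) _
    rw [← hc.eq]
    exact Submodule.mem_sup_left (Submodule.mem_sup_left
      (Submodule.smul_mem _ _ (Rtr_mem_Jid k i t ht)))
  · fin_cases i <;> fin_cases j <;>
      simp only [fin2_mk0, fin2_mk1, cs0, cs1]
    · exact absurd rfl hij
    · apply mixed_core k 0 1 t ht 1
      · intro q
        rw [cs0, cs1, one_smul, xg_comm01 q (-1)]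
        norm_num [sub_eq_add_neg]
      · intro q
        rw [cs0, cs1, one_smul, xg_comm01 q 0, add_zero]
    · apply mixed_core k 1 0 t ht (-1)
      · intro q
        rw [cs0, cs1, neg_one_smul, xg_comm10 q (-1), sub_eq_add_neg]
        norm_num [sub_eq_add_neg]
      · intro q
        rw [cs0, cs1, neg_one_smul, xg_comm10 q 0, sub_eq_add_neg, add_zero]
    · exact absurd rfl hij

lemma xgp_x_mem (k : ℕ) (i : Fin 3) (p : ℤ) (hp : 0 ≤ p) (j : Fin 2) :
    xg i p * xg j.castSucc (-1) ∈ IkL0 k ⊔ Submodule.span U {xg 2 (-1)} := by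
  have base : xg j.castSucc (-1) * xg i p ∈ IkL0 k ⊔ Submodule.span U {xg 2 (-1)} :=
    Submodule.mem_sup_left (Submodule.mem_sup_right
      (Submodule.smul_mem _ _ (xg_mem_nplus i p hp)))
  have hz : xg 2 (p + -1) ∈ IkL0 k ⊔ Submodule.span U {xg 2 (-1)} := by
    by_cases h0 : p = 0
    · subst h0
      refine Submodule.mem_sup_right (Submodule.subset_span ?_)
      norm_num
    · exact Submodule.mem_sup_left (Submodule.mem_sup_right
        (xg_mem_nplus 2 (p + -1) (by omega)))
  fin_cases i <;> fin_cases j <;>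
    simp only [fin2_mk0, fin2_mk1, fin3_mk0, fin3_mk1, fin3_mk2, cs0, cs1] at base ⊢
  · rw [(xg_commute_same _ _ _).eq]; exact base
  · rw [xg_comm01 p (-1)]
    exact Submodule.add_mem _ base hz
  · rw [xg_comm10 p (-1), sub_eq_add_neg]
    exact Submodule.add_mem _ base (Submodule.neg_mem _ hz)
  · rw [(xg_commute_same _ _ _).eq]; exact base
  · rw [(xg2_central p _).eq]; exact base
  · rw [(xg2_central p _).eq]; exact base

lemma mul_x_mem (k : ℕ) (j : Fin 2) (a : U) (ha : a ∈ IkL0 k) :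
    a * xg j.castSucc (-1) ∈ IkL0 k ⊔ Submodule.span U {xg 2 (-1)} := by
  have hspan : IkL0 k = Submodule.span U
      ({u : U | ∃ i : Fin 2, ∃ t : ℤ, (k : ℤ) + 1 ≤ t ∧ u = Rtr k i t} ∪
       {u : U | ∃ i : Fin 3, ∃ m : ℤ, 0 ≤ m ∧ u = xg i m}) := by
    rw [IkL0, Jid, nplusIdeal, Submodule.span_union]
  let f : U →ₗ[U] U :=
    { toFun := fun a => a * xg j.castSucc (-1)
      map_add' := fun u v => add_mul u v _
      map_smul' := fun u v => by simp [smul_eq_mul, mul_assoc] }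
  have hle : Submodule.span U
      ({u : U | ∃ i : Fin 2, ∃ t : ℤ, (k : ℤ) + 1 ≤ t ∧ u = Rtr k i t} ∪
       {u : U | ∃ i : Fin 3, ∃ m : ℤ, 0 ≤ m ∧ u = xg i m})
      ≤ Submodule.comap f (IkL0 k ⊔ Submodule.span U {xg 2 (-1)}) := by
    rw [Submodule.span_le]
    rintro u (⟨i, t, ht, rfl⟩ | ⟨i, m, hm, rfl⟩)
    · exact Rtr_x_mem k i j t ht
    · exact xgp_x_mem k i m hm j
  exact hle (hspan ▸ ha)

lemma T_mul_x (k : ℕ) (j : Fin 2) (a : U)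
    (ha : a ∈ IkL0 k ⊔ Submodule.span U {xg 2 (-1)}) :
    a * xg j.castSucc (-1) ∈ IkL0 k ⊔ Submodule.span U {xg 2 (-1)} := by
  obtain ⟨b, hb, u, hu, rfl⟩ := Submodule.mem_sup.mp ha
  rw [add_mul]
  refine Submodule.add_mem _ (mul_x_mem k j b hb) ?_
  obtain ⟨v, rfl⟩ := Submodule.mem_span_singleton.mp hu
  have heq : (v • xg 2 (-1)) * xg j.castSucc (-1)
      = (v * xg j.castSucc (-1)) • xg 2 (-1) := by
    simp only [smul_eq_mul, mul_assoc]
    rw [(xg2_central (-1) (xg j.castSucc (-1))).eq]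
  rw [heq]
  exact Submodule.mem_sup_right (Submodule.smul_mem _ _ (Submodule.mem_span_singleton_self _))
end Aux


/-- for j ∈ {1,2}, 0 ≤ m ≤ k and a ∈ I_{kΛ₀},
a·x_{α_j}(−1)^m ∈ I_{kΛ₀} + U(𝔫̄)·x_{α₁+α₂}(−1). -/
theorem statement2 (k : ℕ) (hk : 0 < k) (j : Fin 2) (m : ℕ) (hm : m ≤ k)
    (a : U) (ha : a ∈ IkL0 k) :
    a * xg j.castSucc (-1) ^ m ∈ IkL0 k ⊔ Submodule.span U {xg 2 (-1)} := by
  clear hm hk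
  induction m with
  | zero => rw [pow_zero, mul_one]; exact Submodule.mem_sup_left ha
  | succ m ih => rw [pow_succ, ← mul_assoc]; exact T_mul_x k j _ ih

end PrincipalSubspaceSL3
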